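/- Suppose max over Borel probability measures μ on S^d of I(μ) = ∬ arccos|x·y| dμ(x)dμ(y) equals M_d, and M_{d-1} is the analogous maximum on S^{d-1}. Then M_{d-1} ≤ π − π²/(4·M_d). -/

import Mathlib

open RealInnerProductSpace MeasureTheory

/-- The energy integral `I(μ) = ∬ arccos |x·y| dμ(x) dμ(y)` for a measure on the
unit sphere of `ℝⁿ`. -/
noncomputable def energy (n : ℕ) (μ : Measure (Metric.sphere (0 : EuclideanSpace ℝ (Fin n)) 1)) : ℝ :=
  ∫ x, ∫ y, Real.arccos |⟪(x : EuclideanSpace ℝ (Fin n)), (y : EuclideanSpace ℝ (Fin n))⟫| ∂μ ∂μ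

open Real Metric

set_option maxHeartbeats 4000000
set_option synthInstance.maxHeartbeats 1000000

section Aux

/-- Equatorial embedding of `ℝᵈ` into `ℝᵈ⁺¹`. -/
noncomputable def emb (d : ℕ) (x : EuclideanSpace ℝ (Fin d)) : EuclideanSpace ℝ (Fin (d+1)) :=
  (WithLp.equiv 2 _).symm (Fin.snoc ((WithLp.equiv 2 _) x) 0)

variable {d : ℕ}

lemma emb_inner (x y : EuclideanSpace ℝ (Fin d)) : ⟪emb d x, emb d y⟫ = ⟪x, y⟫ := by
  simp [emb, PiLp.inner_apply, RCLike.inner_apply, Fin.sum_univ_castSucc]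

lemma emb_norm (x : EuclideanSpace ℝ (Fin d)) : ‖emb d x‖ = ‖x‖ := by
  rw [norm_eq_sqrt_real_inner, norm_eq_sqrt_real_inner, emb_inner]

lemma emb_cont : Continuous (emb d) := by
  have h1 : Continuous fun f : Fin d → ℝ => (Fin.snoc f 0 : Fin (d+1) → ℝ) := by
    refine continuous_pi fun i => ?_
    induction i using Fin.lastCases with
    | last => simp only [Fin.snoc_last]; exact continuous_const
    | cast i => simp only [Fin.snoc_castSucc]; exact continuous_apply _
  exact (PiLp.continuous_toLp 2 _).comp (h1.comp (PiLp.continuous_ofLp 2 _))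

/-- The "north pole" of `ℝᵈ⁺¹`, orthogonal to the equator. -/
noncomputable def pole (d : ℕ) : EuclideanSpace ℝ (Fin (d+1)) :=
  EuclideanSpace.single (Fin.last d) 1

lemma pole_norm : ‖pole d‖ = 1 := by simp [pole, EuclideanSpace.norm_single]

lemma emb_inner_pole (x : EuclideanSpace ℝ (Fin d)) : ⟪emb d x, pole d⟫ = 0 := by
  simp [emb, pole, PiLp.inner_apply, RCLike.inner_apply, EuclideanSpace.single_apply]

lemma pole_inner_self : ⟪pole d, pole d⟫ = 1 := by
  rw [real_inner_self_eq_norm_sq, pole_norm]; norm_num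

/-- The equatorial embedding on the level of spheres. -/
noncomputable def embS (d : ℕ) (x : Metric.sphere (0 : EuclideanSpace ℝ (Fin d)) 1) :
    Metric.sphere (0 : EuclideanSpace ℝ (Fin (d+1))) 1 :=
  ⟨emb d x, by rw [mem_sphere_zero_iff_norm, emb_norm, ← mem_sphere_zero_iff_norm]; exact x.2⟩

lemma embS_cont : Continuous (embS d) :=
  (emb_cont.comp continuous_subtype_val).subtype_mk _

noncomputable def poleS (d : ℕ) : Metric.sphere (0 : EuclideanSpace ℝ (Fin (d+1))) 1 :=
  ⟨pole d, by rw [mem_sphere_zero_iff_norm]; exact pole_norm⟩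

/-- The convex combination `s • (embedded ν) + (1-s) • δ_pole`. -/
noncomputable def comb (d : ℕ) (ν : Measure (Metric.sphere (0 : EuclideanSpace ℝ (Fin d)) 1))
    (s : ℝ) : Measure (Metric.sphere (0 : EuclideanSpace ℝ (Fin (d+1))) 1) :=
  s.toNNReal • ν.map (embS d) + (1-s).toNNReal • Measure.dirac (poleS d)

variable {ν : Measure (Metric.sphere (0 : EuclideanSpace ℝ (Fin d)) 1)} [IsProbabilityMeasure ν]
  {s : ℝ}

instance : IsProbabilityMeasure (ν.map (embS d)) :=
  Measure.isProbabilityMeasure_map embS_cont.measurable.aemeasurable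

instance : IsFiniteMeasure (comb d ν s) := by
  unfold comb; infer_instance

lemma comb_prob (hs0 : 0 ≤ s) (hs1 : s ≤ 1) : IsProbabilityMeasure (comb d ν s) := by
  constructor
  simp only [comb, Measure.add_apply, Measure.smul_apply, measure_univ, ENNReal.smul_def,
    smul_eq_mul, mul_one]
  rw [← ENNReal.coe_add, ← Real.toNNReal_add hs0 (by linarith)]
  norm_num

lemma integral_comb (hs0 : 0 ≤ s) (hs1 : s ≤ 1)
    (h : Metric.sphere (0 : EuclideanSpace ℝ (Fin (d+1))) 1 → ℝ)
    (hm : StronglyMeasurable h) (C : ℝ) (hb : ∀ x, ‖h x‖ ≤ C) :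
    ∫ x, h x ∂(comb d ν s) = s * ∫ x, h (embS d x) ∂ν + (1 - s) * h (poleS d) := by
  have hint1 : Integrable h (s.toNNReal • ν.map (embS d)) :=
    ⟨hm.aestronglyMeasurable, HasFiniteIntegral.of_bounded (C := C) (ae_of_all _ hb)⟩
  have hint2 : Integrable h ((1-s).toNNReal • Measure.dirac (poleS d)) :=
    ⟨hm.aestronglyMeasurable, HasFiniteIntegral.of_bounded (C := C) (ae_of_all _ hb)⟩
  rw [comb, integral_add_measure hint1 hint2, integral_smul_nnreal_measure,
    integral_smul_nnreal_measure, integral_map embS_cont.measurable.aemeasurable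
      hm.aestronglyMeasurable, integral_dirac' _ _ hm]
  simp [NNReal.smul_def, Real.coe_toNNReal _ hs0, Real.coe_toNNReal _ (by linarith : (0:ℝ) ≤ 1 - s)]

/-- Continuity of the energy integrand. -/
lemma gCont (n : ℕ) : Continuous (fun p : (Metric.sphere (0 : EuclideanSpace ℝ (Fin n)) 1) ×
    (Metric.sphere (0 : EuclideanSpace ℝ (Fin n)) 1) =>
    Real.arccos |⟪(p.1 : EuclideanSpace ℝ (Fin n)), (p.2 : EuclideanSpace ℝ (Fin n))⟫|) := by
  apply Real.continuous_arccos.comp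
  apply continuous_abs.comp
  exact Continuous.inner (continuous_subtype_val.comp continuous_fst)
    (continuous_subtype_val.comp continuous_snd)

lemma gBound (t : ℝ) : ‖Real.arccos |t|‖ ≤ π / 2 := by
  rw [Real.norm_eq_abs, abs_of_nonneg (Real.arccos_nonneg _)]
  exact Real.arccos_le_pi_div_two.2 (abs_nonneg _)

lemma energy_nonneg (n : ℕ) (μ : Measure (Metric.sphere (0 : EuclideanSpace ℝ (Fin n)) 1)) :
    0 ≤ energy n μ :=
  integral_nonneg fun _ => integral_nonneg fun _ => Real.arccos_nonneg _

lemma energy_le (n : ℕ) (μ : Measure (Metric.sphere (0 : EuclideanSpace ℝ (Fin n)) 1))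
    [IsProbabilityMeasure μ] : energy n μ ≤ π / 2 := by
  have h1 : ∀ x : Metric.sphere (0 : EuclideanSpace ℝ (Fin n)) 1,
      ‖∫ y, Real.arccos |⟪(x : EuclideanSpace ℝ (Fin n)), (y : EuclideanSpace ℝ (Fin n))⟫| ∂μ‖
        ≤ π / 2 := fun x => by
    simpa using norm_integral_le_of_norm_le_const (μ := μ) (C := π/2)
      (ae_of_all _ fun y => gBound _)
  have h2 := norm_integral_le_of_norm_le_const (μ := μ) (C := π/2) (ae_of_all _ h1)
  calc energy n μ ≤ ‖energy n μ‖ := le_abs_self _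
  _ ≤ π/2 := by simpa [energy] using h2

lemma energy_comb (hs0 : 0 ≤ s) (hs1 : s ≤ 1) :
    energy (d+1) (comb d ν s) = s^2 * energy d ν + s * (1-s) * π := by
  haveI := comb_prob (ν := ν) hs0 hs1
  have gSM : StronglyMeasurable (fun p : (Metric.sphere (0 : EuclideanSpace ℝ (Fin (d+1))) 1) ×
      (Metric.sphere (0 : EuclideanSpace ℝ (Fin (d+1))) 1) =>
      Real.arccos |⟪(p.1 : EuclideanSpace ℝ (Fin (d+1))), (p.2 : EuclideanSpace ℝ (Fin (d+1)))⟫|) :=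
    (gCont (d+1)).stronglyMeasurable
  have hGm : StronglyMeasurable (fun x : Metric.sphere (0 : EuclideanSpace ℝ (Fin (d+1))) 1 =>
      ∫ y, Real.arccos |⟪(x : EuclideanSpace ℝ (Fin (d+1))),
        (y : EuclideanSpace ℝ (Fin (d+1)))⟫| ∂(comb d ν s)) := gSM.integral_prod_right'
  have hGb : ∀ x : Metric.sphere (0 : EuclideanSpace ℝ (Fin (d+1))) 1,
      ‖∫ y, Real.arccos |⟪(x : EuclideanSpace ℝ (Fin (d+1))),
        (y : EuclideanSpace ℝ (Fin (d+1)))⟫| ∂(comb d ν s)‖ ≤ π/2 := fun x => by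
    simpa using norm_integral_le_of_norm_le_const (μ := comb d ν s) (C := π/2)
      (ae_of_all _ fun y => gBound _)
  -- inner integral at an equatorial point
  have h1 : ∀ x : Metric.sphere (0 : EuclideanSpace ℝ (Fin d)) 1,
      (∫ y, Real.arccos |⟪(embS d x : EuclideanSpace ℝ (Fin (d+1))),
          (y : EuclideanSpace ℝ (Fin (d+1)))⟫| ∂(comb d ν s))
        = s * (∫ y, Real.arccos |⟪(x : EuclideanSpace ℝ (Fin d)),
            (y : EuclideanSpace ℝ (Fin d))⟫| ∂ν) + (1-s) * (π/2) := by
    intro x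
    have hm1 : StronglyMeasurable (fun y : Metric.sphere (0 : EuclideanSpace ℝ (Fin (d+1))) 1 =>
        Real.arccos |⟪(embS d x : EuclideanSpace ℝ (Fin (d+1))),
          (y : EuclideanSpace ℝ (Fin (d+1)))⟫|) :=
      (Real.continuous_arccos.comp (continuous_abs.comp
        (Continuous.inner continuous_const continuous_subtype_val))).stronglyMeasurable
    rw [integral_comb hs0 hs1 _ hm1 (π/2) (fun y => gBound _)]
    congr 1
    · congr 1
      refine integral_congr_ae (ae_of_all _ fun y => ?_)
      show Real.arccos |⟪emb d (x : EuclideanSpace ℝ (Fin d)),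
        emb d (y : EuclideanSpace ℝ (Fin d))⟫| = _
      rw [emb_inner]
    · show (1-s) * Real.arccos |⟪emb d (x : EuclideanSpace ℝ (Fin d)), pole d⟫| = _
      rw [emb_inner_pole, abs_zero, Real.arccos_zero]
  -- inner integral at the pole
  have h2 : (∫ y, Real.arccos |⟪(poleS d : EuclideanSpace ℝ (Fin (d+1))),
      (y : EuclideanSpace ℝ (Fin (d+1)))⟫| ∂(comb d ν s)) = s * (π/2) := by
    have hm2 : StronglyMeasurable (fun y : Metric.sphere (0 : EuclideanSpace ℝ (Fin (d+1))) 1 =>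
        Real.arccos |⟪(poleS d : EuclideanSpace ℝ (Fin (d+1))),
          (y : EuclideanSpace ℝ (Fin (d+1)))⟫|) :=
      (Real.continuous_arccos.comp (continuous_abs.comp
        (Continuous.inner continuous_const continuous_subtype_val))).stronglyMeasurable
    rw [integral_comb hs0 hs1 _ hm2 (π/2) (fun y => gBound _)]
    have e1 : ∀ y : Metric.sphere (0 : EuclideanSpace ℝ (Fin d)) 1,
        Real.arccos |⟪(poleS d : EuclideanSpace ℝ (Fin (d+1))),
          (embS d y : EuclideanSpace ℝ (Fin (d+1)))⟫| = π/2 := fun y => by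
      show Real.arccos |⟪pole d, emb d (y : EuclideanSpace ℝ (Fin d))⟫| = _
      rw [real_inner_comm, emb_inner_pole, abs_zero, Real.arccos_zero]
    rw [integral_congr_ae (ae_of_all _ e1), integral_const]
    have e2 : Real.arccos |⟪(poleS d : EuclideanSpace ℝ (Fin (d+1))),
        (poleS d : EuclideanSpace ℝ (Fin (d+1)))⟫| = 0 := by
      show Real.arccos |⟪pole d, pole d⟫| = 0
      rw [pole_inner_self, abs_one, Real.arccos_one]
    rw [e2]
    simp
  -- integrability of the inner-integral function over ν
  have hFm : StronglyMeasurable (fun x : Metric.sphere (0 : EuclideanSpace ℝ (Fin d)) 1 =>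
      ∫ y, Real.arccos |⟪(x : EuclideanSpace ℝ (Fin d)),
        (y : EuclideanSpace ℝ (Fin d))⟫| ∂ν) := (gCont d).stronglyMeasurable.integral_prod_right'
  have hFint : Integrable (fun x : Metric.sphere (0 : EuclideanSpace ℝ (Fin d)) 1 =>
      ∫ y, Real.arccos |⟪(x : EuclideanSpace ℝ (Fin d)),
        (y : EuclideanSpace ℝ (Fin d))⟫| ∂ν) ν := by
    refine ⟨hFm.aestronglyMeasurable, HasFiniteIntegral.of_bounded (C := π/2)
      (ae_of_all _ fun x => ?_)⟩
    simpa using norm_integral_le_of_norm_le_const (μ := ν) (C := π/2)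
      (ae_of_all _ fun y => gBound _)
  simp only [energy]
  rw [integral_comb hs0 hs1 _ hGm (π/2) hGb, h2,
    integral_congr_ae (ae_of_all _ h1), integral_add (hFint.const_mul s)
      (integrable_const _), integral_const_mul, integral_const]
  simp only [measure_univ, probReal_univ, ENNReal.toReal_one, smul_eq_mul, one_mul]
  ring

end Aux

theorem stmt_6 (d : ℕ) (hd : 1 ≤ d) (Md Md1 : ℝ)
    (hMd : IsGreatest {r : ℝ | ∃ μ : Measure (Metric.sphere (0 : EuclideanSpace ℝ (Fin (d + 1))) 1),
      IsProbabilityMeasure μ ∧ r = energy (d + 1) μ} Md)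
    (hMd1 : IsGreatest {r : ℝ | ∃ μ : Measure (Metric.sphere (0 : EuclideanSpace ℝ (Fin d)) 1),
      IsProbabilityMeasure μ ∧ r = energy d μ} Md1) :
    Md1 ≤ Real.pi - Real.pi ^ 2 / (4 * Md) := by
  obtain ⟨ν, hν, hA⟩ := hMd1.1
  haveI := hν
  set A := Md1 with hAdef
  have hA2 : A ≤ π / 2 := hA ▸ energy_le d ν
  have hA0 : 0 ≤ A := hA ▸ energy_nonneg d ν
  have hπ := Real.pi_pos
  set c : ℝ := π - A with hcdef
  have hc : π / 2 ≤ c := by simp only [hcdef]; linarith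
  have hcpos : 0 < c := by linarith
  set s : ℝ := π / (2 * c) with hsdef
  have hs0 : 0 ≤ s := div_nonneg hπ.le (by linarith)
  have hs1 : s ≤ 1 := (div_le_one (by linarith)).2 (by linarith)
  -- the combined measure witnesses a lower bound for Md
  have hmem : s^2 * A + s * (1-s) * π ∈ {r : ℝ | ∃ μ :
      Measure (Metric.sphere (0 : EuclideanSpace ℝ (Fin (d + 1))) 1),
      IsProbabilityMeasure μ ∧ r = energy (d + 1) μ} := by
    exact ⟨comb d ν s, comb_prob hs0 hs1, by rw [energy_comb hs0 hs1, ← hA]⟩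
  have hle : s^2 * A + s * (1-s) * π ≤ Md := hMd.2 hmem
  have hval : s^2 * A + s * (1-s) * π = π^2 / (4 * c) := by
    rw [hsdef]
    have : A = π - c := by rw [hcdef]; ring
    rw [this]
    field_simp
    ring
  rw [hval] at hle
  have hMdpos : 0 < Md := lt_of_lt_of_le (by positivity) hle
  have hkey : π^2 ≤ Md * (4 * c) := by
    rw [div_le_iff₀ (by positivity)] at hle
    linarith
  have : π^2 / (4 * Md) ≤ c := by
    rw [div_le_iff₀ (by positivity)]
    linarith [hkey]
  linarith [this]
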